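/- For every positive integer N and n ≥ 1, B_{N,n} = n! · Σ_{r=1}^{n} binomial(n+1, r+1) · (-N!)^r · Σ_{i_1+⋯+i_r = n, i_j ≥ 0} 1/((N+i_1)!···(N+i_r)!). -/

import Mathlib

open PowerSeries Finset

noncomputable def eSer (c : ℂ) : PowerSeries ℂ := PowerSeries.mk fun n => c ^ n / n.factorial

noncomputable def dSer (N f : ℕ) : PowerSeries ℂ :=
  PowerSeries.mk fun m => (N.factorial : ℂ) * (f : ℂ) ^ m / (N + m).factorial

noncomputable def hB (N n : ℕ) : ℂ :=
  n.factorial * PowerSeries.coeff n (dSer N 1)⁻¹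

noncomputable def hBP (N n : ℕ) (x : ℂ) : ℂ :=
  n.factorial * PowerSeries.coeff n (eSer x * (dSer N 1)⁻¹)

noncomputable def gBP (N f : ℕ) (χ : DirichletCharacter ℂ f) (n : ℕ) (x : ℂ) : ℂ :=
  n.factorial * PowerSeries.coeff n
    (((f : ℂ) ^ N)⁻¹ • ((∑ a ∈ Finset.Icc 1 f, (PowerSeries.C (χ (a : ZMod f))) * eSer (x + a)) * (dSer N f)⁻¹))

noncomputable def gB (N f : ℕ) (χ : DirichletCharacter ℂ f) (n : ℕ) : ℂ := gBP N f χ n 0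

lemma coeff_pow_tuple (φ : PowerSeries ℂ) : ∀ (r n : ℕ),
    PowerSeries.coeff n (φ ^ r) = ∑ i ∈ Finset.Nat.antidiagonalTuple r n, ∏ j, PowerSeries.coeff (i j) φ
  | 0, 0 => by simp [Finset.Nat.antidiagonalTuple_zero_zero]
  | 0, (n+1) => by simp [Finset.Nat.antidiagonalTuple_zero_succ]
  | (r+1), n => by
    rw [pow_succ', PowerSeries.coeff_mul]
    have ih := coeff_pow_tuple φ r
    simp_rw [ih, Finset.mul_sum]
    rw [← Finset.sum_sigma (s := Finset.HasAntidiagonal.antidiagonal n) (t := fun x => Finset.Nat.antidiagonalTuple r x.2) (f := fun (p : Σ _ : ℕ × ℕ, Fin r → ℕ) => (PowerSeries.coeff p.1.1) φ * ∏ j, (PowerSeries.coeff (p.2 j)) φ)]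
    refine Finset.sum_nbij' (fun x => Fin.cons x.1.1 x.2) (fun i => ⟨(i 0, n - i 0), Fin.tail i⟩)
      ?_ ?_ ?_ ?_ ?_
    · rintro ⟨⟨a, b⟩, i⟩ h
      simp only [Finset.mem_sigma, Finset.HasAntidiagonal.mem_antidiagonal, Finset.Nat.mem_antidiagonalTuple] at h
      simp only [Finset.Nat.mem_antidiagonalTuple, Fin.sum_cons, h.2]
      omega
    · intro i h
      simp only [Finset.Nat.mem_antidiagonalTuple] at h
      rw [Fin.sum_univ_succ] at h
      simp only [Finset.mem_sigma, Finset.HasAntidiagonal.mem_antidiagonal, Finset.Nat.mem_antidiagonalTuple,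
        Fin.tail]
      constructor
      · omega
      · omega
    · rintro ⟨⟨a, b⟩, i⟩ h
      simp only [Finset.mem_sigma, Finset.HasAntidiagonal.mem_antidiagonal, Finset.Nat.mem_antidiagonalTuple] at h
      simp only [Fin.cons_zero, Fin.tail_cons]
      have : n - a = b := by omega
      simp only [this, mul_zero, Finset.sum_const_zero]
    · intro i h
      simp [Fin.cons_self_tail]
    · rintro ⟨⟨a, b⟩, i⟩ h
      simp [Fin.prod_univ_succ]

lemma dSer_const (N : ℕ) : PowerSeries.constantCoeff (dSer N 1) = 1 := by
  simp [dSer, ← PowerSeries.coeff_zero_eq_constantCoeff,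
    div_self (by exact_mod_cast N.factorial_ne_zero : ((N.factorial : ℂ)) ≠ 0)]

lemma coeff_dSer_pow (N k n : ℕ) :
    PowerSeries.coeff n ((dSer N 1) ^ k) =
      (N.factorial : ℂ) ^ k * ∑ i ∈ Finset.Nat.antidiagonalTuple k n, ∏ j, ((N + i j).factorial : ℂ)⁻¹ := by
  rw [coeff_pow_tuple, Finset.mul_sum]
  refine Finset.sum_congr rfl fun i _ => ?_
  simp only [dSer, PowerSeries.coeff_mk, Nat.cast_one, one_pow, mul_one]
  rw [Finset.prod_congr rfl (fun j _ => div_eq_mul_inv ((N.factorial : ℂ)) _),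
    Finset.prod_mul_distrib, Finset.prod_const, Finset.card_univ, Fintype.card_fin]

theorem stmt2 (N : ℕ) (hN : 1 ≤ N) (n : ℕ) (hn : 1 ≤ n) :
    hB N n = (n.factorial : ℂ) * ∑ r ∈ Finset.Icc 1 n,
      ((n + 1).choose (r + 1) : ℂ) * (-(N.factorial : ℂ)) ^ r *
      ∑ i ∈ Finset.Nat.antidiagonalTuple r n, ∏ j, ((N + i j).factorial : ℂ)⁻¹ := by
  set D := dSer N 1 with hD
  have hc : PowerSeries.constantCoeff D ≠ 0 := by rw [dSer_const]; exact one_ne_zero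
  -- geometric sum identity
  have hgeo : (∑ r ∈ Finset.range (n+1), (1 - D) ^ r) * D = 1 - (1 - D) ^ (n+1) := by
    have := geom_sum_mul (1 - D) (n+1)
    have h2 : (1 - D) - 1 = -D := by ring
    rw [h2] at this
    have := congrArg (fun x => -x) this
    calc (∑ r ∈ Finset.range (n+1), (1 - D) ^ r) * D
        = -((∑ r ∈ Finset.range (n+1), (1 - D) ^ r) * -D) := by ring
      _ = -((1 - D) ^ (n+1) - 1) := by rw [this]
      _ = 1 - (1 - D) ^ (n+1) := by ring
  have hdvd : (PowerSeries.X : PowerSeries ℂ) ^ (n+1) ∣ D⁻¹ * (1 - D) ^ (n+1) := by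
    have hx : (PowerSeries.X : PowerSeries ℂ) ∣ (1 - D) := by
      rw [PowerSeries.X_dvd_iff, map_sub, map_one, hD, dSer_const, sub_self]
    exact Dvd.dvd.mul_left (pow_dvd_pow_of_dvd hx (n+1)) _
  have hinv : D⁻¹ = (∑ r ∈ Finset.range (n+1), (1 - D) ^ r) + D⁻¹ * (1 - D) ^ (n+1) := by
    calc D⁻¹ = D⁻¹ * 1 := by ring
      _ = D⁻¹ * ((∑ r ∈ Finset.range (n+1), (1 - D) ^ r) * D + (1 - D) ^ (n+1)) := by
          rw [hgeo]; ring
      _ = (D⁻¹ * D) * (∑ r ∈ Finset.range (n+1), (1 - D) ^ r) + D⁻¹ * (1 - D) ^ (n+1) := by ring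
      _ = _ := by rw [PowerSeries.inv_mul_cancel D hc]; ring
  have hco : PowerSeries.coeff n D⁻¹ =
      ∑ r ∈ Finset.range (n+1), PowerSeries.coeff n ((1 - D) ^ r) := by
    rw [hinv, map_add, PowerSeries.X_pow_dvd_iff.mp hdvd n (by omega), add_zero, map_sum]
  -- expand (1 - D)^r binomially
  have hbin : ∀ r, PowerSeries.coeff n ((1 - D) ^ r) =
      ∑ k ∈ Finset.range (r+1), (r.choose k : ℂ) * (-1) ^ k * PowerSeries.coeff n (D ^ k) := by
    intro r
    have : (1 - D) ^ r = ∑ k ∈ Finset.range (r+1), ((r.choose k : ℂ) * (-1) ^ k) • D ^ k := by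
      rw [sub_eq_add_neg, add_comm, add_pow]
      refine Finset.sum_congr rfl fun k _ => ?_
      rw [one_pow, mul_one, neg_pow, PowerSeries.smul_eq_C_mul, map_mul, map_natCast, map_pow,
        map_neg, map_one]
      ring
    rw [this, map_sum]
    refine Finset.sum_congr rfl fun k _ => ?_
    rw [PowerSeries.coeff_smul, smul_eq_mul]
  rw [hB, hco]
  simp_rw [hbin]
  -- swap sums
  have hswap : ∑ r ∈ Finset.range (n+1), ∑ k ∈ Finset.range (r+1),
        (r.choose k : ℂ) * (-1) ^ k * PowerSeries.coeff n (D ^ k)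
      = ∑ k ∈ Finset.range (n+1), ∑ r ∈ Finset.Icc k n,
        (r.choose k : ℂ) * (-1) ^ k * PowerSeries.coeff n (D ^ k) := by
    have h := (Finset.sum_Ico_Ico_comm 0 (n+1)
      (fun k r => (r.choose k : ℂ) * (-1) ^ k * PowerSeries.coeff n (D ^ k))).symm
    simp only [Finset.range_eq_Ico, ← Finset.Ico_add_one_right_eq_Icc]
    exact h
  rw [hswap]
  congr 1
  have hsplit : Finset.range (n+1) = insert 0 (Finset.Icc 1 n) := by
    ext x
    simp only [Finset.mem_range, Finset.mem_insert, Finset.mem_Icc]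
    omega
  rw [hsplit, Finset.sum_insert (by simp)]
  have h0 : ∑ r ∈ Finset.Icc 0 n, (r.choose 0 : ℂ) * (-1) ^ 0 * PowerSeries.coeff n (D ^ 0) = 0 := by
    have : PowerSeries.coeff n (D ^ 0) = 0 := by
      rw [pow_zero, PowerSeries.coeff_one, if_neg (by omega)]
    simp only [this, mul_zero, Finset.sum_const_zero]
  rw [h0, zero_add]
  refine Finset.sum_congr rfl fun k hk => ?_
  have hfac : ∀ r : ℕ, (r.choose k : ℂ) * (-1) ^ k * PowerSeries.coeff n (D ^ k)
      = (r.choose k : ℂ) * ((-1) ^ k * PowerSeries.coeff n (D ^ k)) := fun r => by ring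
  simp_rw [hfac]
  rw [← Finset.sum_mul]
  have hch : (∑ r ∈ Finset.Icc k n, (r.choose k : ℂ)) = ((n+1).choose (k+1) : ℂ) := by
    rw [← Nat.cast_sum, Nat.sum_Icc_choose]
  rw [hch, hD, coeff_dSer_pow, neg_pow]
  ring
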